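/- arXiv:1810.04258 — 5 statements merged into one kernel-verified Lean document; each statement's English description precedes it below -/
import Mathlib

section
/- In the Mermin–Peres square of 2-qubit Pauli operators with rows (I⊗Z, Z⊗I, Z⊗Z), (X⊗I, I⊗X, X⊗X), (X⊗Z, Z⊗X, Y⊗Y), the three operators in each row and in each column pairwise commute, the product of the operators along each row and along the first two columns is the identity I₄, and the product along the third column is −I₄. -/
open Kronecker Matrix

noncomputable def PX : Matrix (Fin 2) (Fin 2) ℂ := !![0, 1; 1, 0]
noncomputable def PY : Matrix (Fin 2) (Fin 2) ℂ := !![0, -Complex.I; Complex.I, 0]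
noncomputable def PZ : Matrix (Fin 2) (Fin 2) ℂ := !![1, 0; 0, -1]

/-- The Mermin–Peres magic square of two-qubit Pauli operators. -/
noncomputable def MerminSquare : Fin 3 → Fin 3 → Matrix (Fin 2 × Fin 2) (Fin 2 × Fin 2) ℂ :=
  ![![(1 : Matrix (Fin 2) (Fin 2) ℂ) ⊗ₖ PZ, PZ ⊗ₖ (1 : Matrix (Fin 2) (Fin 2) ℂ), PZ ⊗ₖ PZ],
    ![PX ⊗ₖ (1 : Matrix (Fin 2) (Fin 2) ℂ), (1 : Matrix (Fin 2) (Fin 2) ℂ) ⊗ₖ PX, PX ⊗ₖ PX],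
    ![PX ⊗ₖ PZ, PZ ⊗ₖ PX, PY ⊗ₖ PY]]

-- ### 2×2 component facts

private lemma hXX : PX * PX = 1 := by
  ext i j; fin_cases i <;> fin_cases j <;>
    simp [PX, Matrix.mul_apply, Fin.sum_univ_two, Matrix.one_apply]

private lemma hZZ : PZ * PZ = 1 := by
  ext i j; fin_cases i <;> fin_cases j <;>
    simp [PZ, Matrix.mul_apply, Fin.sum_univ_two, Matrix.one_apply]

private lemma hXZ : PX * PZ = -(PZ * PX) := by
  ext i j; fin_cases i <;> fin_cases j <;>
    simp [PX, PZ, Matrix.mul_apply, Fin.sum_univ_two, Matrix.neg_apply]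

private lemma hXY : PX * PY = -(PY * PX) := by
  ext i j; fin_cases i <;> fin_cases j <;>
    simp [PX, PY, Matrix.mul_apply, Fin.sum_univ_two, Matrix.neg_apply]

private lemma hZY : PZ * PY = -(PY * PZ) := by
  ext i j; fin_cases i <;> fin_cases j <;>
    simp [PZ, PY, Matrix.mul_apply, Fin.sum_univ_two, Matrix.neg_apply]

private lemma hZX : PZ * PX = -(PX * PZ) := by rw [hXZ, neg_neg]

private lemma hXZY : PX * PZ * PY = (-Complex.I) • 1 := by
  ext i j; fin_cases i <;> fin_cases j <;>
    simp [PX, PZ, PY, Matrix.mul_apply, Fin.sum_univ_two, Matrix.one_apply,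
      Matrix.smul_apply]

private lemma hZXY : PZ * PX * PY = Complex.I • 1 := by
  ext i j; fin_cases i <;> fin_cases j <;>
    simp [PX, PZ, PY, Matrix.mul_apply, Fin.sum_univ_two, Matrix.one_apply,
      Matrix.smul_apply]

-- ### Kronecker commuting criteria

private lemma neg_kron_neg (M N : Matrix (Fin 2) (Fin 2) ℂ) : (-M) ⊗ₖ (-N) = M ⊗ₖ N := by
  ext ⟨a, b⟩ ⟨c, d⟩; simp [Matrix.kroneckerMap_apply]

private lemma comm_kron {A B C D : Matrix (Fin 2) (Fin 2) ℂ}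
    (h1 : A * C = C * A) (h2 : B * D = D * B) : Commute (A ⊗ₖ B) (C ⊗ₖ D) := by
  rw [commute_iff_eq, ← Matrix.mul_kronecker_mul, ← Matrix.mul_kronecker_mul, h1, h2]

private lemma acomm_kron {A B C D : Matrix (Fin 2) (Fin 2) ℂ}
    (h1 : A * C = -(C * A)) (h2 : B * D = -(D * B)) : Commute (A ⊗ₖ B) (C ⊗ₖ D) := by
  rw [commute_iff_eq, ← Matrix.mul_kronecker_mul, ← Matrix.mul_kronecker_mul, h1, h2,
    neg_kron_neg]

private lemma e1 (A : Matrix (Fin 2) (Fin 2) ℂ) : 1 * A = A * 1 := by rw [one_mul, mul_one]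
private lemma e1' (A : Matrix (Fin 2) (Fin 2) ℂ) : A * 1 = 1 * A := by rw [one_mul, mul_one]

-- row commutation facts
private lemma R001 : Commute ((1 : Matrix (Fin 2) (Fin 2) ℂ) ⊗ₖ PZ) (PZ ⊗ₖ 1) :=
  comm_kron (e1 _) (e1' _)
private lemma R002 : Commute ((1 : Matrix (Fin 2) (Fin 2) ℂ) ⊗ₖ PZ) (PZ ⊗ₖ PZ) :=
  comm_kron (e1 _) rfl
private lemma R012 : Commute (PZ ⊗ₖ (1 : Matrix (Fin 2) (Fin 2) ℂ)) (PZ ⊗ₖ PZ) :=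
  comm_kron rfl (e1 _)
private lemma R101 : Commute (PX ⊗ₖ (1 : Matrix (Fin 2) (Fin 2) ℂ)) (1 ⊗ₖ PX) :=
  comm_kron (e1' _) (e1 _)
private lemma R102 : Commute (PX ⊗ₖ (1 : Matrix (Fin 2) (Fin 2) ℂ)) (PX ⊗ₖ PX) :=
  comm_kron rfl (e1 _)
private lemma R112 : Commute ((1 : Matrix (Fin 2) (Fin 2) ℂ) ⊗ₖ PX) (PX ⊗ₖ PX) :=
  comm_kron (e1 _) rfl
private lemma R201 : Commute (PX ⊗ₖ PZ) (PZ ⊗ₖ PX) := acomm_kron hXZ hZX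
private lemma R202 : Commute (PX ⊗ₖ PZ) (PY ⊗ₖ PY) := acomm_kron hXY hZY
private lemma R212 : Commute (PZ ⊗ₖ PX) (PY ⊗ₖ PY) := acomm_kron hZY hXY

-- column commutation facts
private lemma C001 : Commute ((1 : Matrix (Fin 2) (Fin 2) ℂ) ⊗ₖ PZ) (PX ⊗ₖ 1) :=
  comm_kron (e1 _) (e1' _)
private lemma C002 : Commute ((1 : Matrix (Fin 2) (Fin 2) ℂ) ⊗ₖ PZ) (PX ⊗ₖ PZ) :=
  comm_kron (e1 _) rfl
private lemma C012 : Commute (PX ⊗ₖ (1 : Matrix (Fin 2) (Fin 2) ℂ)) (PX ⊗ₖ PZ) :=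
  comm_kron rfl (e1 _)
private lemma C101 : Commute (PZ ⊗ₖ (1 : Matrix (Fin 2) (Fin 2) ℂ)) (1 ⊗ₖ PX) :=
  comm_kron (e1' _) (e1 _)
private lemma C102 : Commute (PZ ⊗ₖ (1 : Matrix (Fin 2) (Fin 2) ℂ)) (PZ ⊗ₖ PX) :=
  comm_kron rfl (e1 _)
private lemma C112 : Commute ((1 : Matrix (Fin 2) (Fin 2) ℂ) ⊗ₖ PX) (PZ ⊗ₖ PX) :=
  comm_kron (e1 _) rfl
private lemma C201 : Commute (PZ ⊗ₖ PZ) (PX ⊗ₖ PX) := acomm_kron hZX hZX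
private lemma C202 : Commute (PZ ⊗ₖ PZ) (PY ⊗ₖ PY) := acomm_kron hZY hZY
private lemma C212 : Commute (PX ⊗ₖ PX) (PY ⊗ₖ PY) := acomm_kron hXY hXY

/-- In the Mermin–Peres square, the operators in each row and each column pairwise
commute, each row multiplies to the identity, the first two columns multiply to the
identity, and the third column multiplies to minus the identity. -/
theorem mermin_peres_square :
    (∀ i j j' : Fin 3, Commute (MerminSquare i j) (MerminSquare i j')) ∧
    (∀ j i i' : Fin 3, Commute (MerminSquare i j) (MerminSquare i' j)) ∧
    (∀ i : Fin 3, MerminSquare i 0 * MerminSquare i 1 * MerminSquare i 2 = 1) ∧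
    (MerminSquare 0 0 * MerminSquare 1 0 * MerminSquare 2 0 = 1) ∧
    (MerminSquare 0 1 * MerminSquare 1 1 * MerminSquare 2 1 = 1) ∧
    (MerminSquare 0 2 * MerminSquare 1 2 * MerminSquare 2 2 = -1) := by
  refine ⟨?_, ?_, ?_, ?_, ?_, ?_⟩
  · intro i j j'
    fin_cases i <;> fin_cases j <;> fin_cases j'
    · exact Commute.refl _
    · exact R001
    · exact R002
    · exact R001.symm
    · exact Commute.refl _
    · exact R012
    · exact R002.symm
    · exact R012.symm
    · exact Commute.refl _
    · exact Commute.refl _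
    · exact R101
    · exact R102
    · exact R101.symm
    · exact Commute.refl _
    · exact R112
    · exact R102.symm
    · exact R112.symm
    · exact Commute.refl _
    · exact Commute.refl _
    · exact R201
    · exact R202
    · exact R201.symm
    · exact Commute.refl _
    · exact R212
    · exact R202.symm
    · exact R212.symm
    · exact Commute.refl _
  · intro j i i'
    fin_cases j <;> fin_cases i <;> fin_cases i'
    · exact Commute.refl _
    · exact C001
    · exact C002
    · exact C001.symm
    · exact Commute.refl _
    · exact C012
    · exact C002.symm
    · exact C012.symm
    · exact Commute.refl _
    · exact Commute.refl _
    · exact C101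
    · exact C102
    · exact C101.symm
    · exact Commute.refl _
    · exact C112
    · exact C102.symm
    · exact C112.symm
    · exact Commute.refl _
    · exact Commute.refl _
    · exact C201
    · exact C202
    · exact C201.symm
    · exact Commute.refl _
    · exact C212
    · exact C202.symm
    · exact C212.symm
    · exact Commute.refl _
  · intro i
    fin_cases i
    · show ((1 : Matrix (Fin 2) (Fin 2) ℂ) ⊗ₖ PZ) * (PZ ⊗ₖ 1) * (PZ ⊗ₖ PZ) = 1
      rw [← Matrix.mul_kronecker_mul, ← Matrix.mul_kronecker_mul, one_mul, mul_one,
        hZZ, Matrix.one_kronecker_one]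
    · show (PX ⊗ₖ (1 : Matrix (Fin 2) (Fin 2) ℂ)) * (1 ⊗ₖ PX) * (PX ⊗ₖ PX) = 1
      rw [← Matrix.mul_kronecker_mul, ← Matrix.mul_kronecker_mul, one_mul, mul_one,
        hXX, Matrix.one_kronecker_one]
    · show (PX ⊗ₖ PZ) * (PZ ⊗ₖ PX) * (PY ⊗ₖ PY) = 1
      rw [← Matrix.mul_kronecker_mul, ← Matrix.mul_kronecker_mul, hXZY, hZXY,
        Matrix.smul_kronecker, Matrix.kronecker_smul, smul_smul,
        Matrix.one_kronecker_one, neg_mul, Complex.I_mul_I, neg_neg, one_smul]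
  · show ((1 : Matrix (Fin 2) (Fin 2) ℂ) ⊗ₖ PZ) * (PX ⊗ₖ 1) * (PX ⊗ₖ PZ) = 1
    rw [← Matrix.mul_kronecker_mul, ← Matrix.mul_kronecker_mul, one_mul, mul_one,
      hXX, hZZ, Matrix.one_kronecker_one]
  · show (PZ ⊗ₖ (1 : Matrix (Fin 2) (Fin 2) ℂ)) * (1 ⊗ₖ PX) * (PZ ⊗ₖ PX) = 1
    rw [← Matrix.mul_kronecker_mul, ← Matrix.mul_kronecker_mul, one_mul, mul_one,
      hXX, hZZ, Matrix.one_kronecker_one]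
  · show (PZ ⊗ₖ PZ) * (PX ⊗ₖ PX) * (PY ⊗ₖ PY) = -1
    rw [← Matrix.mul_kronecker_mul, ← Matrix.mul_kronecker_mul, hZXY,
      Matrix.smul_kronecker, Matrix.kronecker_smul, smul_smul,
      Matrix.one_kronecker_one, Complex.I_mul_I, neg_one_smul]
end

section
/- If H₁ and H₂ are two distinct geometric hyperplanes of a point-line geometry in which every line has exactly 3 points, then the complement of their symmetric difference, H₃ = complement(H₁ Δ H₂), is also a geometric hyperplane. -/
/-- A geometric hyperplane of a point-line geometry: every line is either contained
in `H` or meets `H` in exactly one point. -/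
def IsGeomHyperplane {P : Type*} (L : Set (Set P)) (H : Set P) : Prop :=
  ∀ l ∈ L, l ⊆ H ∨ (∃! x, x ∈ l ∧ x ∈ H)

lemma third_point {P : Type*} {l : Set P} (hl : l.ncard = 3) {x₁ x₂ : P}
    (h1 : x₁ ∈ l) (h2 : x₂ ∈ l) (hne : x₁ ≠ x₂) :
    ∃! z, z ∈ l ∧ z ≠ x₁ ∧ z ≠ x₂ := by
  rw [Set.ncard_eq_three] at hl
  obtain ⟨a, b, c, hab, hac, hbc, rfl⟩ := hl
  simp only [Set.mem_insert_iff, Set.mem_singleton_iff] at h1 h2 ⊢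
  rcases h1 with rfl | rfl | rfl <;> rcases h2 with rfl | rfl | rfl <;>
    first
    | exact absurd rfl hne
    | (refine ⟨c, ⟨by tauto, ?_, ?_⟩, ?_⟩ <;> try (intro y hy)) <;> tauto
    | (refine ⟨b, ⟨by tauto, ?_, ?_⟩, ?_⟩ <;> try (intro y hy)) <;> tauto
    | (refine ⟨a, ⟨by tauto, ?_, ?_⟩, ?_⟩ <;> try (intro y hy)) <;> tauto

/-- In a point-line geometry all of whose lines have exactly 3 points, the complement
of the symmetric difference of two distinct geometric hyperplanes is again a
geometric hyperplane. -/
theorem boxplus_of_hyperplanes_is_hyperplane {P : Type*} (L : Set (Set P))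
    (hL : ∀ l ∈ L, l.ncard = 3) (H₁ H₂ : Set P)
    (h₁ : IsGeomHyperplane L H₁) (h₂ : IsGeomHyperplane L H₂) (hne : H₁ ≠ H₂) :
    IsGeomHyperplane L (symmDiff H₁ H₂)ᶜ := by
  intro l hl
  rcases h₁ l hl with hc1 | ⟨x₁, ⟨hx₁l, hx₁⟩, hu₁⟩
  · rcases h₂ l hl with hc2 | ⟨x₂, ⟨hx₂l, hx₂⟩, hu₂⟩
    · left
      intro y hy
      have := hc1 hy; have := hc2 hy
      simp only [Set.mem_compl_iff, Set.mem_symmDiff]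
      tauto
    · right
      refine ⟨x₂, ⟨hx₂l, ?_⟩, ?_⟩
      · simp only [Set.mem_compl_iff, Set.mem_symmDiff]
        have := hc1 hx₂l; tauto
      · rintro y ⟨hyl, hy⟩
        simp only [Set.mem_compl_iff, Set.mem_symmDiff] at hy
        have := hc1 hyl
        exact hu₂ y ⟨hyl, by tauto⟩
  · rcases h₂ l hl with hc2 | ⟨x₂, ⟨hx₂l, hx₂⟩, hu₂⟩
    · right
      refine ⟨x₁, ⟨hx₁l, ?_⟩, ?_⟩
      · simp only [Set.mem_compl_iff, Set.mem_symmDiff]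
        have := hc2 hx₁l; tauto
      · rintro y ⟨hyl, hy⟩
        simp only [Set.mem_compl_iff, Set.mem_symmDiff] at hy
        have := hc2 hyl
        exact hu₁ y ⟨hyl, by tauto⟩
    · by_cases hx : x₁ = x₂
      · left
        intro y hy
        simp only [Set.mem_compl_iff, Set.mem_symmDiff]
        rintro (⟨hy1, hy2⟩ | ⟨hy2, hy1⟩)
        · have := hu₁ y ⟨hy, hy1⟩; subst this; subst hx; exact hy2 hx₂
        · have := hu₂ y ⟨hy, hy2⟩; subst this; subst hx; exact hy1 hx₁
      · right
        obtain ⟨z, ⟨hzl, hz1, hz2⟩, hzu⟩ := third_point (hL l hl) hx₁l hx₂l hx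
        have hzH1 : z ∉ H₁ := fun h => hz1 (hu₁ z ⟨hzl, h⟩)
        have hzH2 : z ∉ H₂ := fun h => hz2 (hu₂ z ⟨hzl, h⟩)
        refine ⟨z, ⟨hzl, ?_⟩, ?_⟩
        · simp only [Set.mem_compl_iff, Set.mem_symmDiff]; tauto
        · rintro y ⟨hyl, hy⟩
          simp only [Set.mem_compl_iff, Set.mem_symmDiff] at hy
          apply hzu
          refine ⟨hyl, ?_, ?_⟩
          · rintro rfl; exact hy (Or.inl ⟨hx₁, fun h => hx (hu₂ y ⟨hyl, h⟩)⟩)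
          · rintro rfl; exact hy (Or.inr ⟨hx₂, fun h => hx ((hu₁ y ⟨hyl, h⟩).symm)⟩)
end

section
/- Every tensor in ℂ² ⊗ ℂ² ⊗ ℂ² is a sum of at most 4 pure tensors; moreover, the GHZ state |000⟩ + |111⟩ has tensor rank exactly 2, i.e. it is a sum of 2 pure tensors but is not itself a pure tensor. -/
/-- A pure (rank-one) tensor `u ⊗ v ⊗ w` in `ℂ² ⊗ ℂ² ⊗ ℂ²`, written as a
hypermatrix. -/
def pureT (u v w : Fin 2 → ℂ) : Fin 2 → Fin 2 → Fin 2 → ℂ :=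
  fun i j k => u i * v j * w k

/-- The standard basis vector `e_a` of `ℂ²`. -/
noncomputable def e (a : Fin 2) : Fin 2 → ℂ := Pi.single a 1

/-- The basis tensor `|abc⟩ = e_a ⊗ e_b ⊗ e_c`. -/
noncomputable def ket (a b c : Fin 2) : Fin 2 → Fin 2 → Fin 2 → ℂ :=
  pureT (e a) (e b) (e c)

/-- Every tensor in `ℂ² ⊗ ℂ² ⊗ ℂ²` is a sum of at most 4 pure tensors; the GHZ state
`|000⟩ + |111⟩` is a sum of 2 pure tensors but is not a pure tensor, i.e. it has
tensor rank exactly 2. -/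
theorem ghz_rank_two :
    (∀ T : Fin 2 → Fin 2 → Fin 2 → ℂ,
      ∃ u v w : Fin 4 → Fin 2 → ℂ, T = ∑ r, pureT (u r) (v r) (w r)) ∧
    (∃ u v w : Fin 2 → Fin 2 → ℂ,
      ket 0 0 0 + ket 1 1 1 = ∑ r, pureT (u r) (v r) (w r)) ∧
    ¬ (∃ u v w : Fin 2 → ℂ, ket 0 0 0 + ket 1 1 1 = pureT u v w) := by
  refine ⟨?_, ?_, ?_⟩
  · intro T
    refine ⟨![fun i => T i 0 0, fun i => T i 0 1, fun i => T i 1 0, fun i => T i 1 1],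
      ![e 0, e 0, e 1, e 1], ![e 0, e 1, e 0, e 1], ?_⟩
    funext i j k
    fin_cases j <;> fin_cases k <;>
      simp [pureT, e, Fin.sum_univ_four, Pi.single_apply, Matrix.vecHead, Matrix.vecTail]
  · refine ⟨![e 0, e 1], ![e 0, e 1], ![e 0, e 1], ?_⟩
    funext i j k
    simp [ket, pureT, Fin.sum_univ_two]
  · rintro ⟨u, v, w, h⟩
    have h000 := congrFun (congrFun (congrFun h 0) 0) 0
    have h001 := congrFun (congrFun (congrFun h 0) 0) 1
    have h111 := congrFun (congrFun (congrFun h 1) 1) 1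
    simp [ket, pureT, e, Pi.single, Function.update] at h000 h001 h111
    rcases h001 with (h' | h') | h'
    · simp [h'] at h000
    · simp [h'] at h000
    · simp [h'] at h111
end

section
/- The W state |100⟩ + |010⟩ + |001⟩ ∈ ℂ² ⊗ ℂ² ⊗ ℂ² has tensor rank 3: it cannot be written as a sum of two pure tensors, but it is a sum of three pure tensors. -/
/-- The W state `|100⟩ + |010⟩ + |001⟩` has tensor rank 3: it is not a sum of two
pure tensors, but it is a sum of three pure tensors. -/
theorem w_state_rank_three :
    ¬ (∃ u v w : Fin 2 → Fin 2 → ℂ,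
        ket 1 0 0 + ket 0 1 0 + ket 0 0 1 = ∑ r, pureT (u r) (v r) (w r)) ∧
    (∃ u v w : Fin 3 → Fin 2 → ℂ,
        ket 1 0 0 + ket 0 1 0 + ket 0 0 1 = ∑ r, pureT (u r) (v r) (w r)) := by
  constructor
  · rintro ⟨u, v, w, H⟩
    -- name the 12 coordinates
    set a0 := u 0 0; set a1 := u 0 1
    set d0 := u 1 0; set d1 := u 1 1
    set b0 := v 0 0; set b1 := v 0 1
    set f0 := v 1 0; set f1 := v 1 1
    set c0 := w 0 0; set c1 := w 0 1
    set g0 := w 1 0; set g1 := w 1 1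
    -- extract the 8 scalar equations
    have key : ∀ i j k : Fin 2,
        (ket 1 0 0 + ket 0 1 0 + ket 0 0 1) i j k
          = u 0 i * v 0 j * w 0 k + u 1 i * v 1 j * w 1 k := by
      intro i j k
      have := congrFun (congrFun (congrFun H i) j) k
      simpa [pureT, Fin.sum_univ_two] using this
    have hval : ∀ i j k : Fin 2,
        (ket 1 0 0 + ket 0 1 0 + ket 0 0 1) i j k
          = (if i = 1 ∧ j = 0 ∧ k = 0 then 1 else 0)
            + (if i = 0 ∧ j = 1 ∧ k = 0 then 1 else 0)
            + (if i = 0 ∧ j = 0 ∧ k = 1 then 1 else 0) := by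
      intro i j k
      fin_cases i <;> fin_cases j <;> fin_cases k <;>
        simp [ket, pureT, e, Pi.single_apply]
    have h000 : a0 * b0 * c0 + d0 * f0 * g0 = 0 := by
      have := (hval 0 0 0).symm.trans (key 0 0 0); simpa using this.symm
    have h100 : a1 * b0 * c0 + d1 * f0 * g0 = 1 := by
      have := (hval 1 0 0).symm.trans (key 1 0 0); simpa using this.symm
    have h010 : a0 * b1 * c0 + d0 * f1 * g0 = 1 := by
      have := (hval 0 1 0).symm.trans (key 0 1 0); simpa using this.symm
    have h001 : a0 * b0 * c1 + d0 * f0 * g1 = 1 := by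
      have := (hval 0 0 1).symm.trans (key 0 0 1); simpa using this.symm
    have h110 : a1 * b1 * c0 + d1 * f1 * g0 = 0 := by
      have := (hval 1 1 0).symm.trans (key 1 1 0); simpa using this.symm
    have h101 : a1 * b0 * c1 + d1 * f0 * g1 = 0 := by
      have := (hval 1 0 1).symm.trans (key 1 0 1); simpa using this.symm
    have h011 : a0 * b1 * c1 + d0 * f1 * g1 = 0 := by
      have := (hval 0 1 1).symm.trans (key 0 1 1); simpa using this.symm
    have h111 : a1 * b1 * c1 + d1 * f1 * g1 = 0 := by
      have := (hval 1 1 1).symm.trans (key 1 1 1); simpa using this.symm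
    set D : ℂ := (a0 * d1 - a1 * d0) * (b0 * f1 - b1 * f0) with hD
    -- determinant of slice M0
    have E1 : c0 * g0 * D = -1 := by
      rw [hD]
      linear_combination (a1*b1*c0 + d1*f1*g0) * h000
        - (a1*b0*c0 + d1*f0*g0) * h010 - h100
    -- determinant of slice M1
    have E2 : c1 * g1 * D = 0 := by
      rw [hD]
      linear_combination (a1*b1*c1 + d1*f1*g1) * h001 + h111
        - (a1*b0*c1 + d1*f0*g1) * h011
    -- determinant of M0 + M1
    have E3 : (c0 + c1) * (g0 + g1) * D = -1 := by
      rw [hD]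
      linear_combination (a1*b1*(c0+c1) + d1*f1*(g0+g1)) * (h000 + h001)
        + (h110 + h111)
        - (a1*b0*(c0+c1) + d1*f0*(g0+g1)) * (h010 + h011)
        - (h100 + h101)
    have E4 : (c0 * g1 + c1 * g0) * D = 0 := by linear_combination E3 - E1 - E2
    have hDne : D ≠ 0 := by
      intro h; rw [h] at E1; simp at E1
    have hc1g1 : c1 * g1 = 0 := by
      rcases mul_eq_zero.mp E2 with h | h
      · exact h
      · exact absurd h hDne
    have hmix : c0 * g1 + c1 * g0 = 0 := by
      rcases mul_eq_zero.mp E4 with h | h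
      · exact h
      · exact absurd h hDne
    have hc0 : c0 ≠ 0 := by intro h; rw [h] at E1; simp at E1
    have hg0 : g0 ≠ 0 := by intro h; rw [h] at E1; simp at E1
    rcases mul_eq_zero.mp hc1g1 with hc1 | hg1
    · -- c1 = 0, so c0 * g1 = 0, so g1 = 0
      have hg1 : g1 = 0 := by
        have : c0 * g1 = 0 := by linear_combination hmix - g0 * hc1
        rcases mul_eq_zero.mp this with h | h
        · exact absurd h hc0
        · exact h
      rw [hc1, hg1] at h001
      simp at h001
    · -- g1 = 0, so c1 * g0 = 0, so c1 = 0
      have hc1 : c1 = 0 := by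
        have : c1 * g0 = 0 := by linear_combination hmix - c0 * hg1
        rcases mul_eq_zero.mp this with h | h
        · exact h
        · exact absurd h hg0
      rw [hc1, hg1] at h001
      simp at h001
  · refine ⟨![e 1, e 0, e 0], ![e 0, e 1, e 0], ![e 0, e 0, e 1], ?_⟩
    funext i j k
    simp [ket, Fin.sum_univ_three, Pi.add_apply]
end

section
/- The W state is a limit of rank-2 tensors (border rank 2): for t ≠ 0, the tensor T_t = (1/t)·((e₀ + t e₁)⊗(e₀ + t e₁)⊗(e₀ + t e₁) − e₀⊗e₀⊗e₀) has rank ≤ 2 and T_t → |100⟩ + |010⟩ + |001⟩ as t → 0. -/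
/-- The curve of tensors `T_t = (1/t)·((e₀+te₁)⊗(e₀+te₁)⊗(e₀+te₁) − e₀⊗e₀⊗e₀)`. -/
noncomputable def Tcurve (t : ℂ) : Fin 2 → Fin 2 → Fin 2 → ℂ :=
  (1 / t) • (pureT (e 0 + t • e 1) (e 0 + t • e 1) (e 0 + t • e 1) - pureT (e 0) (e 0) (e 0))

noncomputable def gcurve (t : ℂ) : Fin 2 → Fin 2 → Fin 2 → ℂ :=
  (ket 1 0 0 + ket 0 1 0 + ket 0 0 1) + t • (ket 1 1 0 + ket 1 0 1 + ket 0 1 1)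
    + (t * t) • ket 1 1 1

lemma Tcurve_eq (t : ℂ) (ht : t ≠ 0) : Tcurve t = gcurve t := by
  funext i j k
  simp only [Tcurve, gcurve, pureT, ket, e, Pi.smul_apply, Pi.add_apply, Pi.sub_apply,
    smul_eq_mul]
  fin_cases i <;> fin_cases j <;> fin_cases k <;>
    simp [Pi.single_apply] <;> field_simp

/-- The W state has border rank 2: for every `t ≠ 0` the tensor `T_t` is a sum of at
most two pure tensors, and `T_t → |100⟩ + |010⟩ + |001⟩` as `t → 0`. -/
theorem w_state_border_rank_two :
    (∀ t : ℂ, t ≠ 0 → ∃ u v w : Fin 2 → Fin 2 → ℂ,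
        Tcurve t = ∑ r, pureT (u r) (v r) (w r)) ∧
    Filter.Tendsto Tcurve (nhdsWithin 0 {0}ᶜ)
      (nhds (ket 1 0 0 + ket 0 1 0 + ket 0 0 1)) := by
  constructor
  · intro t ht
    refine ⟨![(1/t) • (e 0 + t • e 1), (-(1/t)) • e 0],
      ![e 0 + t • e 1, e 0], ![e 0 + t • e 1, e 0], ?_⟩
    funext i j k
    simp [Tcurve, pureT, Fin.sum_univ_two]
    ring
  · have hcont : Filter.Tendsto gcurve (nhdsWithin 0 {0}ᶜ)
        (nhds (ket 1 0 0 + ket 0 1 0 + ket 0 0 1)) := by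
      have : Continuous gcurve := by
        unfold gcurve
        fun_prop
      have h := this.continuousAt (x := (0:ℂ)) |>.continuousWithinAt (s := {0}ᶜ)
      simpa [gcurve, ContinuousWithinAt] using h
    refine hcont.congr' ?_
    filter_upwards [self_mem_nhdsWithin] with t ht
    exact (Tcurve_eq t ht).symm
end
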